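/- Let (B, Θ) be a category with a structure of nullhomotopies satisfying the reduced interchange condition, with a Θ-strong zero object, strong Θ-kernels of all arrows, strong Θ-cokernels of all terminal arrows, and pullbacks. Let S be a class of arrows of B closed under composition, stable under pullbacks, containing all identities, satisfying left cancellation (if f·g ∈ S then g ∈ S), and satisfying condition (Sub). If, for an arrow g : X → Y with Θ-kernel (N(g), n_g, ν_g), the object X is S-proper and N(g) is S-global, then the snail sequence N(0_{N(g)}) → N(0_X) → N(0_Y) → π₀(N(g)) → π₀(X) → π₀(Y) is S-exact at π₀(N(g)). -/
import Mathlib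


open CategoryTheory CategoryTheory.Limits

noncomputable section

universe v u

/-- A structure of nullhomotopies `Θ` on a category `B` (Grandis).  We encode the family of
sets `Θ(g)`, for `g : X ⟶ Y`, as a total space `H X Y` together with a projection `ar`
assigning to every nullhomotopy the arrow on which it lives; thus `Θ(g) = {φ : H X Y // ar φ = g}`.
The maps `f ∘ - ∘ h : Θ(g) → Θ(f·g·h)` are encoded by `act`. -/
structure NullStruct (B : Type u) [Category.{v} B] where
  H : B → B → Type v
  ar : ∀ {X Y : B}, H X Y → (X ⟶ Y)
  act : ∀ {A X Y D : B}, (A ⟶ X) → H X Y → (Y ⟶ D) → H A D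
  ar_act : ∀ {A X Y D : B} (f : A ⟶ X) (φ : H X Y) (h : Y ⟶ D),
      ar (act f φ h) = f ≫ ar φ ≫ h
  act_id : ∀ {X Y : B} (φ : H X Y), act (𝟙 X) φ (𝟙 Y) = φ
  act_comp : ∀ {A' A X Y D D' : B} (f' : A' ⟶ A) (f : A ⟶ X) (φ : H X Y)
      (h : Y ⟶ D) (h' : D ⟶ D'),
      act (f' ≫ f) φ (h ≫ h') = act f' (act f φ h) h'

namespace NullStruct

variable {B : Type u} [Category.{v} B]

/-- The reduced interchange condition: `α ∘ g = f ∘ β` for `α ∈ Θ(f)`, `β ∈ Θ(g)`. -/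
def ReducedInterchange (Θ : NullStruct B) : Prop :=
  ∀ {A X Y : B} (f : A ⟶ X) (g : X ⟶ Y) (α : Θ.H A X) (β : Θ.H X Y),
    Θ.ar α = f → Θ.ar β = g → Θ.act (𝟙 A) α g = Θ.act f β (𝟙 Y)

/-- `(N, n, ν)` is a Θ-kernel of `g`. -/
structure IsKer (Θ : NullStruct B) {N X Y : B} (g : X ⟶ Y) (n : N ⟶ X) (ν : Θ.H N Y) : Prop where
  ar_eq : Θ.ar ν = n ≫ g
  lift : ∀ {A : B} (f : A ⟶ X) (φ : Θ.H A Y), Θ.ar φ = f ≫ g →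
    ∃! f' : A ⟶ N, f' ≫ n = f ∧ Θ.act f' ν (𝟙 Y) = φ

/-- `(N, n, ν)` is a strong Θ-kernel of `g`. -/
structure IsStrongKer (Θ : NullStruct B) {N X Y : B} (g : X ⟶ Y) (n : N ⟶ X) (ν : Θ.H N Y)
    extends NullStruct.IsKer Θ g n ν : Prop where
  liftH : ∀ {A : B} (f : A ⟶ N) (φ : Θ.H A X), Θ.ar φ = f ≫ n →
    Θ.act (𝟙 A) φ g = Θ.act f ν (𝟙 Y) →
    ∃! φ' : Θ.H A N, Θ.ar φ' = f ∧ Θ.act (𝟙 A) φ' n = φ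

/-- `(Q, c, γ)` is a Θ-cokernel of `g`. -/
structure IsCoker (Θ : NullStruct B) {X Y Q : B} (g : X ⟶ Y) (c : Y ⟶ Q) (γ : Θ.H X Q) : Prop where
  ar_eq : Θ.ar γ = g ≫ c
  desc : ∀ {D : B} (f : Y ⟶ D) (φ : Θ.H X D), Θ.ar φ = g ≫ f →
    ∃! f' : Q ⟶ D, c ≫ f' = f ∧ Θ.act (𝟙 X) γ f' = φ

/-- `(Q, c, γ)` is a strong Θ-cokernel of `g`. -/
structure IsStrongCoker (Θ : NullStruct B) {X Y Q : B} (g : X ⟶ Y) (c : Y ⟶ Q) (γ : Θ.H X Q)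
    extends NullStruct.IsCoker Θ g c γ : Prop where
  descH : ∀ {D : B} (f : Q ⟶ D) (φ : Θ.H Y D), Θ.ar φ = c ≫ f →
    Θ.act g φ (𝟙 D) = Θ.act (𝟙 X) γ f →
    ∃! φ' : Θ.H Q D, Θ.ar φ' = f ∧ Θ.act c φ' (𝟙 D) = φ

/-- A Θ-strong zero object: a zero object `Z` such that, for every `X`, the sets of
nullhomotopies `Θ(X ⟶ Z)` and `Θ(Z ⟶ X)` are singletons. -/
structure StrongZero (Θ : NullStruct B) where
  Z : B
  isZero : IsZero Z
  toZ : ∀ X : B, Θ.H X Z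
  toZ_uniq : ∀ (X : B) (φ : Θ.H X Z), φ = toZ X
  fromZ : ∀ X : B, Θ.H Z X
  fromZ_uniq : ∀ (X : B) (φ : Θ.H Z X), φ = fromZ X

/-- The zero arrow `X ⟶ Z ⟶ Y` through the Θ-strong zero object. -/
def StrongZero.zero {Θ : NullStruct B} (ζ : Θ.StrongZero) (X Y : B) : X ⟶ Y :=
  ζ.isZero.from_ X ≫ ζ.isZero.to_ Y

/-- The canonical nullhomotopy `*` on the zero arrow `X ⟶ Z ⟶ Y`. -/
def StrongZero.star {Θ : NullStruct B} (ζ : Θ.StrongZero) (X Y : B) : Θ.H X Y :=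
  Θ.act (𝟙 X) (ζ.toZ X) (ζ.isZero.to_ Y)

/-- An object `Y` is discrete: every nullhomotopy with codomain `Y` lives on the zero arrow
and is the canonical one (i.e. `Θ(g) = ∅` if `g ≠ 0`, and `Θ(0) = {*}`). -/
def IsDiscrete {Θ : NullStruct B} (ζ : Θ.StrongZero) (Y : B) : Prop :=
  ∀ (X : B) (φ : Θ.H X Y), Θ.ar φ = ζ.zero X Y ∧ φ = ζ.star X Y

/-- Codiscrete objects: dual of discrete. -/
def IsCodiscrete {Θ : NullStruct B} (ζ : Θ.StrongZero) (X : B) : Prop :=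
  ∀ (Y : B) (φ : Θ.H X Y), Θ.ar φ = ζ.zero X Y ∧ φ = ζ.star X Y

/-- `k` is a categorical kernel of `g` (with respect to the zero arrows through the
Θ-strong zero object). -/
def IsCatKer {Θ : NullStruct B} (ζ : Θ.StrongZero) {K X Y : B} (k : K ⟶ X) (g : X ⟶ Y) : Prop :=
  k ≫ g = ζ.zero K Y ∧
  ∀ {W : B} (w : W ⟶ X), w ≫ g = ζ.zero W Y → ∃! w' : W ⟶ K, w' ≫ k = w

/-- `(f, φ, g)` is S-exact: any factorization of `(f, φ)` through a Θ-kernel of `g`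
belongs to `S`. -/
def SExact (Θ : NullStruct B) (S : ∀ ⦃X Y : B⦄, (X ⟶ Y) → Prop)
    {W X Y : B} (f : W ⟶ X) (φ : Θ.H W Y) (g : X ⟶ Y) : Prop :=
  ∀ {N : B} (n : N ⟶ X) (ν : Θ.H N Y), Θ.IsKer g n ν →
    ∀ (w : W ⟶ N), w ≫ n = f → Θ.act w ν (𝟙 Y) = φ → S w

/-- `Y` is S-proper relative to the canonical arrow `η : Y ⟶ π₀(Y)`: the canonical
comparison `N(id_Y) ⟶ N(η_Y)` belongs to `S`. -/
def SProper (Θ : NullStruct B) (S : ∀ ⦃X Y : B⦄, (X ⟶ Y) → Prop)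
    {Y P : B} (η : Y ⟶ P) : Prop :=
  ∀ {NI : B} (nI : NI ⟶ Y) (νI : Θ.H NI Y), Θ.IsKer (𝟙 Y) nI νI →
  ∀ {NE : B} (nE : NE ⟶ Y) (νE : Θ.H NE P), Θ.IsKer η nE νE →
  ∀ (w : NI ⟶ NE), w ≫ nE = nI → Θ.act w νE (𝟙 P) = Θ.act (𝟙 NI) νI η → S w

/-- Condition (Sub) on a class `S` of arrows. -/
def CondSub {Θ : NullStruct B} (ζ : Θ.StrongZero) (S : ∀ ⦃X Y : B⦄, (X ⟶ Y) → Prop) : Prop :=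
  ∀ ⦃X Y X₀ Y₀ : B⦄ (g : X ⟶ Y) (g₀ : X₀ ⟶ Y₀) (x : X ⟶ X₀) (y : Y ⟶ Y₀),
    g ≫ y = x ≫ g₀ →
    ∀ ⦃Kg Kg₀ Kx Ky : B⦄ (kg : Kg ⟶ X) (kg₀ : Kg₀ ⟶ X₀) (kx : Kx ⟶ X) (ky : Ky ⟶ Y),
      IsCatKer ζ kg g → IsCatKer ζ kg₀ g₀ → IsCatKer ζ kx x → IsCatKer ζ ky y →
      ∀ (u : Kg ⟶ Kg₀) (v : Kx ⟶ Ky),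
        u ≫ kg₀ = kg ≫ x → v ≫ ky = kx ≫ g → S g → S u → S v

end NullStruct

open NullStruct

section Helpers

variable {B : Type u} [Category.{v} B] {Θ : NullStruct B}

lemma NullStruct.act_comp_one {A' A X Y : B} (f' : A' ⟶ A) (f : A ⟶ X) (φ : Θ.H X Y) :
    Θ.act (f' ≫ f) φ (𝟙 Y) = Θ.act f' (Θ.act f φ (𝟙 Y)) (𝟙 Y) := by
  rw [← Θ.act_comp]; simp

lemma NullStruct.act_swap {A X Y D : B} (f : A ⟶ X) (φ : Θ.H X Y) (h : Y ⟶ D) :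
    Θ.act f (Θ.act (𝟙 X) φ h) (𝟙 D) = Θ.act (𝟙 A) (Θ.act f φ (𝟙 Y)) h := by
  rw [← Θ.act_comp, ← Θ.act_comp]; simp

lemma NullStruct.StrongZero.zero_comp' (ζ : Θ.StrongZero) {A X Y : B} (h : X ⟶ Y) :
    ζ.zero A X ≫ h = ζ.zero A Y := by
  simp only [StrongZero.zero, Category.assoc]
  congr 1
  exact ζ.isZero.eq_of_src _ _

lemma NullStruct.StrongZero.comp_zero' (ζ : Θ.StrongZero) {A X Y : B} (f : A ⟶ X) :
    f ≫ ζ.zero X Y = ζ.zero A Y := by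
  simp only [StrongZero.zero, ← Category.assoc]
  congr 1
  exact ζ.isZero.eq_of_tgt _ _

lemma NullStruct.StrongZero.ar_star' (ζ : Θ.StrongZero) (A Y : B) :
    Θ.ar (ζ.star A Y) = ζ.zero A Y := by
  simp only [StrongZero.star, NullStruct.ar_act, StrongZero.zero, Category.id_comp]
  congr 1
  exact ζ.isZero.eq_of_tgt _ _

/-- Two arrows into a Θ-kernel agree as soon as their composites with the kernel arrow and
their induced nullhomotopies agree. -/
lemma NullStruct.IsKer.hom_ext {N X Y : B} {g : X ⟶ Y} {n : N ⟶ X} {ν : Θ.H N Y}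
    (hk : Θ.IsKer g n ν) {A : B} {a b : A ⟶ N}
    (h1 : a ≫ n = b ≫ n) (h2 : Θ.act a ν (𝟙 Y) = Θ.act b ν (𝟙 Y)) : a = b := by
  obtain ⟨f', -, huniq⟩ := hk.lift (b ≫ n) (Θ.act b ν (𝟙 Y))
    (by rw [Θ.ar_act, hk.ar_eq]; simp)
  exact (huniq a ⟨h1, h2⟩).trans (huniq b ⟨rfl, rfl⟩).symm

/-- A Θ-kernel of an arrow into a discrete object is a categorical kernel. -/
lemma NullStruct.isCatKer_of_isKer (ζ : Θ.StrongZero) {N X Y : B} {g : X ⟶ Y} {n : N ⟶ X}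
    {ν : Θ.H N Y} (hk : Θ.IsKer g n ν) (hd : IsDiscrete ζ Y) : IsCatKer ζ n g := by
  constructor
  · rw [← hk.ar_eq]; exact (hd N ν).1
  · intro W w hw
    obtain ⟨w', ⟨hw1, hw2⟩, huniq⟩ := hk.lift w (ζ.star W Y) (by rw [ζ.ar_star', ← hw])
    exact ⟨w', hw1, fun y hy => huniq y ⟨hy, (hd W (Θ.act y ν (𝟙 Y))).2⟩⟩

/-- Categorical kernels are monomorphic. -/
lemma NullStruct.IsCatKer.hom_ext' {ζ : Θ.StrongZero} {K X Y : B} {k : K ⟶ X} {g : X ⟶ Y}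
    (h : IsCatKer ζ k g) {W : B} (a b : W ⟶ K) (hab : a ≫ k = b ≫ k) : a = b := by
  obtain ⟨w', -, huniq⟩ := h.2 (b ≫ k) (by rw [Category.assoc, h.1, ζ.comp_zero'])
  exact (huniq a hab).trans (huniq b rfl).symm

/-- An object carrying a strong Θ-kernel of an arrow out of the zero object is discrete.
In particular, every `π₀`-object is discrete. -/
lemma NullStruct.discrete_of_sker (ζ : Θ.StrongZero) (hRI : Θ.ReducedInterchange)
    {C P : B} {c : ζ.Z ⟶ C} {p : P ⟶ ζ.Z} {μ : Θ.H P C}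
    (h : Θ.IsStrongKer c p μ) : IsDiscrete ζ P := by
  intro A φ
  have key : ∀ (k : A ⟶ P) (ψ : Θ.H A P), Θ.ar ψ = k →
      Θ.act k μ (𝟙 C) = Θ.act (𝟙 A) (ζ.toZ A) c := by
    intro k ψ hψ
    have h1 : Θ.act (𝟙 A) ψ (p ≫ c) = Θ.act k μ (𝟙 C) := hRI k (p ≫ c) ψ μ hψ h.ar_eq
    have h2 : Θ.act (𝟙 A) ψ (p ≫ c) = Θ.act (𝟙 A) (Θ.act (𝟙 A) ψ p) c := by
      rw [← Θ.act_comp]; simp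
    rw [← h1, h2, ← ζ.toZ_uniq A (Θ.act (𝟙 A) ψ p)]
  have k1 := key (Θ.ar φ) φ rfl
  have k2 := key (ζ.zero A P) (ζ.star A P) (ζ.ar_star' A P)
  have harr : Θ.ar φ = ζ.zero A P := by
    obtain ⟨f', -, huniq⟩ := h.lift (Θ.ar φ ≫ p) (Θ.act (Θ.ar φ) μ (𝟙 C))
      (by rw [Θ.ar_act, h.ar_eq]; simp)
    exact (huniq (Θ.ar φ) ⟨rfl, rfl⟩).trans
      (huniq (ζ.zero A P) ⟨ζ.isZero.eq_of_tgt _ _, k2.trans k1.symm⟩).symm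
  refine ⟨harr, ?_⟩
  obtain ⟨φ', -, huniq⟩ := h.liftH (ζ.zero A P) (ζ.toZ A)
    (ζ.isZero.eq_of_tgt _ _) k2.symm
  exact (huniq φ ⟨harr, ζ.toZ_uniq A _⟩).trans
    (huniq (ζ.star A P) ⟨ζ.ar_star' A P, ζ.toZ_uniq A _⟩).symm

end Helpers

/-- Exactness of the snail sequence at `π₀(N(g))`.
Let `(B, Θ)` satisfy the reduced interchange condition, with a Θ-strong zero object `ζ`,
strong Θ-kernels of all arrows, strong Θ-cokernels of all terminal arrows, and pullbacks.
Let `S` be a class of arrows closed under composition, stable under pullbacks, containing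
the identities, with the left cancellation property and satisfying condition (Sub).  If
`X` is S-proper and `N(g)` is S-global, then the snail sequence of `g` is S-exact at
`π₀(N(g))`, i.e. the pair `(δ = Δ ≫ η_{N(g)}, π₀(n_g))` is S-exact. -/
theorem snail_sequence_S_exact_at_pi0_Ng
    {B : Type u} [Category.{v} B] [HasPullbacks B] (Θ : NullStruct B)
    (hRI : Θ.ReducedInterchange) (ζ : Θ.StrongZero)
    (hK : ∀ (X Y : B) (g : X ⟶ Y), ∃ (N : B) (n : N ⟶ X) (ν : Θ.H N Y), Θ.IsStrongKer g n ν)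
    (hC : ∀ (Y : B), ∃ (Q : B) (c : ζ.Z ⟶ Q) (γ : Θ.H Y Q),
        Θ.IsStrongCoker (ζ.isZero.from_ Y) c γ)
    -- the class `S` of arrows
    (S : ∀ ⦃X Y : B⦄, (X ⟶ Y) → Prop)
    (hS_comp : ∀ {X Y Z : B} (u : X ⟶ Y) (v : Y ⟶ Z), S u → S v → S (u ≫ v))
    (hS_pb : ∀ {P X Y Z : B} (fst : P ⟶ X) (snd : P ⟶ Y) (u : X ⟶ Z) (v : Y ⟶ Z),
        IsPullback fst snd u v → S v → S fst)
    (hS_id : ∀ X : B, S (𝟙 X))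
    (hS_cancel : ∀ {X Y Z : B} (u : X ⟶ Y) (v : Y ⟶ Z), S (u ≫ v) → S v)
    (hS_sub : CondSub ζ S)
    -- the arrow `g` and its strong Θ-kernel
    {X Y : B} (g : X ⟶ Y)
    {Ng : B} (ng : Ng ⟶ X) (νg : Θ.H Ng Y) (hg : Θ.IsStrongKer g ng νg)
    -- strong Θ-kernels of the initial arrows of `N(g)`, `X`, `Y`
    {KN : B} (kN : KN ⟶ ζ.Z) (νN : Θ.H KN Ng) (hkN : Θ.IsStrongKer (ζ.isZero.to_ Ng) kN νN)
    {KX : B} (kX : KX ⟶ ζ.Z) (νX : Θ.H KX X) (hkX : Θ.IsStrongKer (ζ.isZero.to_ X) kX νX)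
    {KY : B} (kY : KY ⟶ ζ.Z) (νY : Θ.H KY Y) (hkY : Θ.IsStrongKer (ζ.isZero.to_ Y) kY νY)
    -- `π₀`-data of `N(g)`, `X`, `Y`
    {CN : B} (cN : ζ.Z ⟶ CN) (γN : Θ.H Ng CN)
    (hcN : Θ.IsStrongCoker (ζ.isZero.from_ Ng) cN γN)
    {PN : B} (pN : PN ⟶ ζ.Z) (μN : Θ.H PN CN) (hpN : Θ.IsStrongKer cN pN μN)
    (ηN : Ng ⟶ PN) (hηN : Θ.act ηN μN (𝟙 CN) = γN)
    {CX : B} (cX : ζ.Z ⟶ CX) (γX : Θ.H X CX)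
    (hcX : Θ.IsStrongCoker (ζ.isZero.from_ X) cX γX)
    {PX : B} (pX : PX ⟶ ζ.Z) (μX : Θ.H PX CX) (hpX : Θ.IsStrongKer cX pX μX)
    (ηX : X ⟶ PX) (hηX : Θ.act ηX μX (𝟙 CX) = γX)
    {CY : B} (cY : ζ.Z ⟶ CY) (γY : Θ.H Y CY)
    (hcY : Θ.IsStrongCoker (ζ.isZero.from_ Y) cY γY)
    {PY : B} (pY : PY ⟶ ζ.Z) (μY : Θ.H PY CY) (hpY : Θ.IsStrongKer cY pY μY)
    (ηY : Y ⟶ PY) (hηY : Θ.act ηY μY (𝟙 CY) = γY)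
    -- the arrows of the snail sequence
    (nng : KN ⟶ KX) (hnng₀ : nng ≫ kX = kN)
    (hnng : Θ.act nng νX (𝟙 X) = Θ.act (𝟙 KN) νN ng)
    (nmg : KX ⟶ KY) (hnmg₀ : nmg ≫ kY = kX)
    (hnmg : Θ.act nmg νY (𝟙 Y) = Θ.act (𝟙 KX) νX g)
    (Δ : KY ⟶ Ng) (hΔ₀ : Δ ≫ ng = ζ.zero KY X) (hΔ : Θ.act Δ νg (𝟙 Y) = νY)
    (cng : CN ⟶ CX) (hcng₀ : cN ≫ cng = cX)
    (hcng : Θ.act (𝟙 Ng) γN cng = Θ.act ng γX (𝟙 CX))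
    (png : PN ⟶ PX) (hpng₀ : png ≫ pX = pN)
    (hpng : Θ.act png μX (𝟙 CX) = Θ.act (𝟙 PN) μN cng)
    (cg : CX ⟶ CY) (hcg₀ : cX ≫ cg = cY)
    (hcg : Θ.act (𝟙 X) γX cg = Θ.act g γY (𝟙 CY))
    (pg : PX ⟶ PY) (hpg₀ : pg ≫ pY = pX)
    (hpg : Θ.act pg μY (𝟙 CY) = Θ.act (𝟙 PX) μX cg)
    -- `X` is S-proper, `N(g)` is S-global
    (hX_proper : SProper Θ S ηX) (hNg_global : S ηN) :
    SExact Θ S (Δ ≫ ηN) (ζ.star KY PX) png := by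
  -- `π₀`-objects are discrete
  have dPX : IsDiscrete ζ PX := Θ.discrete_of_sker ζ hRI hpX
  have dPN : IsDiscrete ζ PN := Θ.discrete_of_sker ζ hRI hpN
  -- the commuting square `ηN ≫ png = ng ≫ ηX`
  have square : ηN ≫ png = ng ≫ ηX := by
    apply hpX.toIsKer.hom_ext (ζ.isZero.eq_of_tgt _ _)
    rw [Θ.act_comp_one, Θ.act_comp_one, hpng, Θ.act_swap, hηN, hcng, hηX]
  -- `Δ : KY ⟶ Ng` is a categorical kernel of `ng`
  have hΔng : IsCatKer ζ Δ ng := by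
    refine ⟨hΔ₀, ?_⟩
    intro W t ht
    have har : Θ.ar (Θ.act t νg (𝟙 Y)) = ζ.isZero.from_ W ≫ ζ.isZero.to_ Y := by
      rw [Θ.ar_act, hg.ar_eq, Category.comp_id, ← Category.assoc, ht, ζ.zero_comp']
      rfl
    obtain ⟨t', ⟨ht'1, ht'2⟩, -⟩ := hkY.lift (ζ.isZero.from_ W) (Θ.act t νg (𝟙 Y)) har
    refine ⟨t', ?_, ?_⟩
    · apply hg.toIsKer.hom_ext
      · rw [Category.assoc, hΔ₀, ζ.comp_zero']; exact ht.symm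
      · rw [Θ.act_comp_one, hΔ, ht'2]
    · intro s' hs'
      apply hkY.toIsKer.hom_ext (ζ.isZero.eq_of_tgt _ _)
      rw [ht'2, ← hs', Θ.act_comp_one, hΔ]
  -- unpack the `SExact` statement
  intro M m μM hM w hwm hwφ
  have hMcat : IsCatKer ζ m png := Θ.isCatKer_of_isKer ζ hM dPX
  -- auxiliary strong Θ-kernels
  obtain ⟨NE, nE, νE, hE⟩ := hK X PX ηX
  obtain ⟨NN, nN, νN2, hN2⟩ := hK Ng PN ηN
  obtain ⟨NI, nI, νI, hI⟩ := hK X X (𝟙 X)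
  obtain ⟨NIN, nIN, νIN, hIN⟩ := hK Ng Ng (𝟙 Ng)
  have hEcat : IsCatKer ζ nE ηX := Θ.isCatKer_of_isKer ζ hE.toIsKer dPX
  have hNcat : IsCatKer ζ nN ηN := Θ.isCatKer_of_isKer ζ hN2.toIsKer dPN
  -- the induced arrow `u : N(ηN) ⟶ N(ηX)`
  have hker : (nN ≫ ng) ≫ ηX = ζ.zero NN PX := by
    have h0 : nN ≫ ηN = ζ.zero NN PN := by rw [← hN2.ar_eq]; exact (dPN NN νN2).1
    rw [Category.assoc, ← square, ← Category.assoc, h0, ζ.zero_comp']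
  obtain ⟨u, hu1, -⟩ := hEcat.2 (nN ≫ ng) hker
  -- the comparison `N(id_Ng) ⟶ N(id_X)` is a split mono (in fact iso), via `f`, `φf`, `r`, `t₀`
  obtain ⟨f, ⟨hf1, hf2⟩, -⟩ := hg.lift nI (Θ.act (𝟙 NI) νI g)
    (by rw [Θ.ar_act, hI.ar_eq]; simp)
  obtain ⟨φf, ⟨hφ1, hφ2⟩, -⟩ := hg.liftH f νI (by rw [hI.ar_eq, hf1]; simp) hf2.symm
  obtain ⟨r, ⟨hr1, hr2⟩, -⟩ := hIN.lift f φf (by rw [hφ1]; simp)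
  obtain ⟨t₀, ⟨ht₀1, ht₀2⟩, -⟩ := hI.lift (nIN ≫ ng) (Θ.act (𝟙 NIN) νIN ng)
    (by rw [Θ.ar_act, hIN.ar_eq]; simp)
  have rt : r ≫ t₀ = 𝟙 NI := by
    apply hI.toIsKer.hom_ext
    · rw [Category.assoc, ht₀1, ← Category.assoc, hr1, hf1, Category.id_comp]
    · rw [Θ.act_comp_one, ht₀2, Θ.act_swap, hr2, hφ2, Θ.act_id]
  -- the comparisons into the kernels of `ηN`, `ηX`
  obtain ⟨sN, ⟨hsN1, -⟩, -⟩ := hN2.lift nIN (Θ.act (𝟙 NIN) νIN ηN)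
    (by rw [Θ.ar_act, hIN.ar_eq]; simp)
  obtain ⟨s, ⟨hs1, hs2⟩, -⟩ := hE.lift nI (Θ.act (𝟙 NI) νI ηX)
    (by rw [Θ.ar_act, hI.ar_eq]; simp)
  -- `S s` by S-properness of `X`, `S t₀` since `t₀` is split epi, hence `S u`
  have hSs : S s := hX_proper nI νI hI.toIsKer nE νE hE.toIsKer s hs1 hs2
  have hSt : S t₀ := hS_cancel r t₀ (by rw [rt]; exact hS_id NI)
  have comm2 : sN ≫ u = t₀ ≫ s := by
    apply hEcat.hom_ext'
    rw [Category.assoc, hu1, Category.assoc, hs1, ← Category.assoc, hsN1, ht₀1]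
  have hSu : S u := hS_cancel sN u (by rw [comm2]; exact hS_comp t₀ s hSt hSs)
  -- conclude by condition (Sub)
  exact hS_sub ηN ηX ng png square nN nE Δ m hNcat hEcat hΔng hMcat u w hu1 hwm
    hNg_global hSu
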